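/- For the Weibull survival function F̄(T) = exp(-(T/r)^k) with k > 1, r > 0, and ρ ∈ (0,1), the unique positive solution T* of the equation (T/F̄(T))·F̄'(T) - ln F̄(T) - 2 ln ρ = 0 is T* = (2 r^k ln ρ/(1-k))^{1/k}, and T* does not depend on the system longevity L. -/

import Mathlib

/-- For the Weibull survival function `F̄(T) = exp(-(T/r)^k)`, `k > 1`, `ρ ∈ (0,1)`,
the unique positive solution of `(T/F̄(T))·F̄'(T) - ln F̄(T) - 2 ln ρ = 0` is
`T* = (2 r^k ln ρ/(1-k))^(1/k)`; in particular `T*` does not depend on `L`. -/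
theorem stmt_3 (ρ r k : ℝ) (hρ : ρ ∈ Set.Ioo (0:ℝ) 1) (hr : 0 < r) (hk : 1 < k)
    (Fbar : ℝ → ℝ) (hF : ∀ t, Fbar t = Real.exp (-(t / r) ^ k))
    (Tstar : ℝ) (hTstar : Tstar = (2 * r ^ k * Real.log ρ / (1 - k)) ^ (1 / k)) :
    0 < Tstar ∧
    (∀ T : ℝ, 0 < T →
      ((T / Fbar T) * deriv Fbar T - Real.log (Fbar T) - 2 * Real.log ρ = 0 ↔
        T = Tstar)) := by
  obtain ⟨hρ0, hρ1⟩ := hρ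
  have hlogρ : Real.log ρ < 0 := Real.log_neg hρ0 hρ1
  have hk0 : (0:ℝ) < k := lt_trans one_pos hk
  have hkne : k ≠ 0 := ne_of_gt hk0
  have hkm : 1 - k < 0 := by linarith
  have hne : (1:ℝ) - k ≠ 0 := ne_of_lt hkm
  set c : ℝ := 2 * Real.log ρ / (1 - k) with hc
  have hcpos : 0 < c := div_pos_of_neg_of_neg (by linarith) hkm
  have hrk : (0:ℝ) < r ^ k := Real.rpow_pos_of_pos hr k
  -- Tstar = r * c^(1/k)
  have hTs : Tstar = r * c ^ (1/k) := by
    rw [hTstar]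
    have h' : 2 * r ^ k * Real.log ρ / (1 - k) = r ^ k * c := by
      rw [hc]; ring
    rw [h', Real.mul_rpow (le_of_lt hrk) (le_of_lt hcpos),
      ← Real.rpow_mul hr.le, mul_one_div_cancel hkne, Real.rpow_one]
  have hTspos : 0 < Tstar := by
    rw [hTs]; exact mul_pos hr (Real.rpow_pos_of_pos hcpos _)
  refine ⟨hTspos, fun T hT => ?_⟩
  have hTr : 0 < T / r := div_pos hT hr
  -- compute derivative
  have h1 : HasDerivAt (fun t : ℝ => t / r) (1 / r) T := (hasDerivAt_id T).div_const r
  have h2 : HasDerivAt (fun x : ℝ => x ^ k) (k * (T / r) ^ (k - 1)) (T / r) :=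
    Real.hasDerivAt_rpow_const (Or.inl (ne_of_gt hTr))
  have h3 : HasDerivAt (fun t : ℝ => ((t / r) ^ k : ℝ)) (k * (T / r) ^ (k - 1) * (1 / r)) T :=
    HasDerivAt.comp (h := fun t : ℝ => t / r) T h2 h1
  have h5 : HasDerivAt Fbar
      (Real.exp (-(T / r) ^ k) * -(k * (T / r) ^ (k - 1) * (1 / r))) T := by
    have := h3.neg.exp
    convert this using 2 <;> simp [hF]
  have hder : deriv Fbar T = Real.exp (-(T / r) ^ k) * -(k * (T / r) ^ (k - 1) * (1 / r)) :=
    h5.deriv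
  have hexp : Real.exp (-(T / r) ^ k) ≠ 0 := Real.exp_ne_zero _
  have hpow : (T / r) ^ (k - 1) * (T / r) = (T / r) ^ k := by
    nth_rewrite 2 [← Real.rpow_one (T / r)]
    rw [← Real.rpow_add hTr]
    ring_nf
  have hrw : (T / Fbar T) * deriv Fbar T - Real.log (Fbar T) - 2 * Real.log ρ
      = (1 - k) * (T / r) ^ k - 2 * Real.log ρ := by
    rw [hder, hF, Real.log_exp]
    have key : T / Real.exp (-(T / r) ^ k) *
        (Real.exp (-(T / r) ^ k) * -(k * (T / r) ^ (k - 1) * (1 / r)))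
        = -(k * (T / r) ^ k) := by
      rw [← hpow]; field_simp
    rw [key]; ring
  rw [hrw]
  constructor
  · intro h
    have hxc : (T / r) ^ k = c := by
      rw [hc, eq_div_iff hne]; linarith
    have h' : T / r = c ^ (1 / k) := by
      rw [← hxc, ← Real.rpow_mul hTr.le, mul_one_div_cancel hkne, Real.rpow_one]
    rw [hTs, ← h', mul_comm, div_mul_cancel₀ T hr.ne']
  · intro h
    have hTrc : T / r = c ^ (1 / k) := by
      rw [h, hTs, mul_comm, mul_div_assoc, div_self hr.ne', mul_one]
    have hxc : (T / r) ^ k = c := by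
      rw [hTrc, ← Real.rpow_mul hcpos.le, one_div_mul_cancel hkne, Real.rpow_one]
    have hcc : (1 - k) * c = 2 * Real.log ρ := by
      rw [hc]; field_simp
    rw [hxc, hcc]; ring
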